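/- Let P be a finite atomic lattice with a monomial labeling M satisfying: every meet-irreducible is labeled by a monomial ≠ 1, and any two elements whose labels share a common variable are comparable. Define f(b) = ∏_{p : b ≰ p} m_p. Then f is injective on P. -/

import Mathlib

open Classical in
/-- With the hypotheses of the coordinatization theorem (monomials as exponent vectors
`Fin k → ℕ`; every meet-irreducible is non-trivially labeled; elements whose labels
share a variable are comparable), the map `f b = ∏_{p ∈ ⌈b⌉ᶜ} m p` is injective on the
finite atomic lattice `P`. -/
theorem stmt_17 (k : ℕ) (P : Type) [Fintype P] [Lattice P] [OrderBot P]
    (hatomic : ∀ b : P, IsLUB {a : P | IsAtom a ∧ a ≤ b} b)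
    (m : P → (Fin k → ℕ))
    (h1 : ∀ p : P, (∀ a b : P, p < a → p < b → a ⊓ b ≠ p) → m p ≠ 0)
    (h2 : ∀ p q : P, m p ⊓ m q ≠ 0 → p ≤ q ∨ q ≤ p)
    (f : P → (Fin k → ℕ))
    (hf : ∀ b : P, f b = ∑ p ∈ Finset.univ.filter (fun p : P => ¬ b ≤ p), m p) :
    Function.Injective f := by
  -- main step: equality of f implies ≤
  have key : ∀ a b : P, f a = f b → a ≤ b := by
    intro a b hab
    by_contra han
    -- find a maximal element p with b ≤ p and ¬ a ≤ p; it is meet-irreducible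
    obtain ⟨p, hp, hpmax⟩ : ∃ p ∈ Finset.univ.filter (fun q : P => b ≤ q ∧ ¬ a ≤ q),
        ∀ x ∈ Finset.univ.filter (fun q : P => b ≤ q ∧ ¬ a ≤ q), ¬ p < x := by
      obtain ⟨p, hp⟩ := Finset.exists_maximal
        (s := Finset.univ.filter (fun q : P => b ≤ q ∧ ¬ a ≤ q)) ⟨b, by simp [han]⟩
      exact ⟨p, hp.1, fun x hx hpx => hpx.not_ge (hp.2 hx hpx.le)⟩
    simp only [Finset.mem_filter, Finset.mem_univ, true_and] at hp
    obtain ⟨hbp, hap⟩ := hp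
    have hmi : ∀ x y : P, p < x → p < y → x ⊓ y ≠ p := by
      intro x y hx hy hxy
      have hax : a ≤ x := by
        by_contra h
        exact hpmax x (by simp [le_trans hbp hx.le, h]) hx
      have hay : a ≤ y := by
        by_contra h
        exact hpmax y (by simp [le_trans hbp hy.le, h]) hy
      exact hap (hxy ▸ le_inf hax hay)
    have hmp : m p ≠ 0 := h1 p hmi
    obtain ⟨i, hi⟩ := Function.ne_iff.mp hmp
    -- compare i-th coordinates
    set A := Finset.univ.filter (fun q : P => ¬ a ≤ q) with hA
    set B := Finset.univ.filter (fun q : P => ¬ b ≤ q) with hB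
    have hfa : f a i = ∑ q ∈ A, m q i := by
      rw [hf a]; simp [Finset.sum_apply, hA]
    have hfb : f b i = ∑ q ∈ B, m q i := by
      rw [hf b]; simp [Finset.sum_apply, hB]
    -- restrict to elements whose label contains variable i
    set A' := A.filter (fun q : P => m q i ≠ 0) with hA'
    set B' := B.filter (fun q : P => m q i ≠ 0) with hB'
    have hsa : ∑ q ∈ A', m q i = ∑ q ∈ A, m q i := Finset.sum_filter_ne_zero A
    have hsb : ∑ q ∈ B', m q i = ∑ q ∈ B, m q i := Finset.sum_filter_ne_zero B
    have hsub : B' ⊆ A' := by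
      intro q hq
      simp only [hB', hB, Finset.mem_filter, Finset.mem_univ, true_and] at hq
      obtain ⟨hbq, hqi⟩ := hq
      have hcomp : p ≤ q ∨ q ≤ p := by
        apply h2
        intro h0
        have : (m p ⊓ m q) i = 0 := by rw [h0]; rfl
        simp only [Pi.inf_apply, Nat.min_eq_zero_iff] at this
        rcases this with h | h
        · exact hi h
        · exact hqi h
      rcases hcomp with h | h
      · exact absurd (le_trans hbp h) hbq
      · simp only [hA', hA, Finset.mem_filter, Finset.mem_univ, true_and]
        exact ⟨fun haq => hap (le_trans haq h), hqi⟩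
    have hpA : p ∈ A' := by
      simp only [hA', hA, Finset.mem_filter, Finset.mem_univ, true_and]
      exact ⟨hap, hi⟩
    have hpB : p ∉ B' := by
      simp only [hB', hB, Finset.mem_filter, Finset.mem_univ, true_and]
      intro h
      exact h.1 hbp
    have hlt : ∑ q ∈ B', m q i < ∑ q ∈ A', m q i :=
      Finset.sum_lt_sum_of_subset hsub hpA hpB (Nat.pos_of_ne_zero hi)
        (fun j _ _ => Nat.zero_le _)
    rw [hsa, hsb, ← hfa, ← hfb, hab] at hlt
    exact lt_irrefl _ hlt
  intro a b hab
  exact le_antisymm (key a b hab) (key b a hab.symm)
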